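/- Let f ∈ ℤ[x] with f(ζ) = 0, deg f = d, and all roots simple. Then |f'(ζ)| ≥ d^(−2d) · (max|f_i|)^(−d²) · 2^(−d(d−1)). -/

import Mathlib

open Polynomial

noncomputable def Complex.abs : AbsoluteValue ℂ ℝ := IsAbsoluteValue.toAbsoluteValue (norm : ℂ → ℝ)

lemma Complex.norm_eq_abs (z : ℂ) : ‖z‖ = Complex.abs z := rfl

lemma Complex.abs_intCast (n : ℤ) : Complex.abs (n : ℂ) = |(n : ℝ)| := Complex.norm_intCast n

lemma Complex.abs_natCast (n : ℕ) : Complex.abs (n : ℂ) = n := Complex.norm_natCast n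


-- aux lemma 1: integrality
lemma aux_int {S : Type*} [CommRing S] (g : Polynomial ℤ) (w : S) (c : ℤ)
    (h : IsIntegral ℤ ((c : S) * w)) (m : ℕ) (hm : g.natDegree < m + 1) :
    IsIntegral ℤ ((c : S) ^ m * aeval w g) := by
  rw [aeval_eq_sum_range' hm, Finset.mul_sum]
  apply IsIntegral.sum
  intro i hi
  rw [Finset.mem_range] at hi
  have hi' : i ≤ m := Nat.lt_succ_iff.mp hi
  have key : (c : S) ^ m * (g.coeff i • w ^ i)
      = (algebraMap ℤ S (g.coeff i * c ^ (m - i))) * ((c : S) * w) ^ i := by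
    have : (c : S) ^ m = (c : S) ^ (m - i) * (c : S) ^ i := by
      rw [← pow_add, Nat.sub_add_cancel hi']
    rw [zsmul_eq_mul, this, mul_pow, algebraMap_int_eq, eq_intCast]
    push_cast
    ring
  rw [key]
  exact (isIntegral_algebraMap).mul (h.pow i)

/-- The maximum absolute value of the coefficients of an integer polynomial. -/
def maxCoeff (f : Polynomial ℤ) : ℕ :=
  f.support.sup fun i => (f.coeff i).natAbs

lemma coeff_le_maxCoeff (f : Polynomial ℤ) (i : ℕ) : (f.coeff i).natAbs ≤ maxCoeff f := by
  by_cases h : i ∈ f.support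
  · exact Finset.le_sup (f := fun i => (f.coeff i).natAbs) h
  · simp [Polynomial.notMem_support_iff.mp h]

lemma abs_coeff_le (f : Polynomial ℤ) (i : ℕ) :
    Complex.abs ((f.coeff i : ℂ)) ≤ (maxCoeff f : ℝ) := by
  rw [Complex.abs_intCast]
  rw [← Int.cast_abs, Int.abs_eq_natAbs]
  exact_mod_cast coeff_le_maxCoeff f i

lemma one_le_maxCoeff (f : Polynomial ℤ) (hf : f ≠ 0) : 1 ≤ maxCoeff f := by
  have h := coeff_le_maxCoeff f f.natDegree
  have h2 : f.coeff f.natDegree ≠ 0 := by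
    rw [← Polynomial.leadingCoeff]
    exact Polynomial.leadingCoeff_ne_zero.mpr hf
  have h3 : 1 ≤ (f.coeff f.natDegree).natAbs := by
    omega
  omega

lemma root_bound (f : Polynomial ℤ) (hf : f ≠ 0) (w : ℂ) (hw : aeval w f = 0) :
    Complex.abs ((f.leadingCoeff : ℂ) * w) ≤ 2 * (maxCoeff f : ℝ) := by
  set M := (maxCoeff f : ℝ) with hMdef
  have hc0 : (f.leadingCoeff : ℂ) ≠ 0 := by
    exact_mod_cast Polynomial.leadingCoeff_ne_zero.mpr hf
  have hcM : Complex.abs ((f.leadingCoeff : ℂ)) ≤ M := abs_coeff_le f f.natDegree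
  set F := f.map (Int.castRingHom ℂ) with hFdef
  have hF0 : F ≠ 0 := by
    rw [hFdef, Polynomial.map_ne_zero_iff (f := Int.castRingHom ℂ) Int.cast_injective]
    exact hf
  have hroot : F.IsRoot w := by
    rw [Polynomial.IsRoot, hFdef, Polynomial.eval_map]
    rw [Polynomial.aeval_def] at hw
    rwa [← algebraMap_int_eq]
  have h1 := hroot.norm_lt_cauchyBound hF0
  have hlc : F.leadingCoeff = (f.leadingCoeff : ℂ) := by
    rw [hFdef, Polynomial.leadingCoeff_map_of_leadingCoeff_ne_zero]
    · rfl
    · exact hc0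
  set s := (Finset.range F.natDegree).sup (fun i => ‖F.coeff i‖₊) with hsdef
  have hsM : (s : ℝ) ≤ M := by
    have key : s ≤ ((maxCoeff f : NNReal)) := by
      apply Finset.sup_le
      intro i _
      rw [← NNReal.coe_le_coe, coe_nnnorm, NNReal.coe_natCast]
      rw [hFdef, Polynomial.coeff_map]
      exact abs_coeff_le f i
    exact_mod_cast key
  have h2 : ‖w‖ < (s : ℝ) / Complex.abs ((f.leadingCoeff : ℂ)) + 1 := by
    have := (NNReal.coe_lt_coe).mpr h1
    rw [Polynomial.cauchyBound] at this
    rw [coe_nnnorm] at this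
    rw [NNReal.coe_add, NNReal.coe_div, NNReal.coe_one] at this
    rwa [hlc, coe_nnnorm, Complex.norm_eq_abs] at this
  have hcpos : 0 < Complex.abs ((f.leadingCoeff : ℂ)) := by
    exact AbsoluteValue.pos _ hc0
  rw [map_mul]
  calc Complex.abs ((f.leadingCoeff : ℂ)) * Complex.abs w
      ≤ Complex.abs ((f.leadingCoeff : ℂ)) * ((s : ℝ) / Complex.abs ((f.leadingCoeff : ℂ)) + 1) := by
        rw [← Complex.norm_eq_abs w]
        exact mul_le_mul_of_nonneg_left h2.le hcpos.le
    _ = (s : ℝ) + Complex.abs ((f.leadingCoeff : ℂ)) := by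
        rw [mul_add, mul_one, mul_div_cancel₀ _ (ne_of_gt hcpos)]
    _ ≤ M + M := add_le_add hsM hcM
    _ = 2 * M := by ring

lemma conj_bound (f : Polynomial ℤ) (hf : f ≠ 0) (hd : f.natDegree ≠ 0) (w : ℂ)
    (hw : aeval w f = 0) :
    Complex.abs ((f.leadingCoeff : ℂ) ^ (f.natDegree - 1) * aeval w (derivative f))
      ≤ (f.natDegree : ℝ) ^ 2 * 2 ^ (f.natDegree - 1) * (maxCoeff f : ℝ) ^ f.natDegree := by
  obtain ⟨e, he⟩ : ∃ e, f.natDegree = e + 1 := ⟨f.natDegree - 1, by omega⟩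
  set M := (maxCoeff f : ℝ) with hMdef
  set c := (f.leadingCoeff : ℂ) with hcdef
  have hM0 : (0:ℝ) ≤ M := Nat.cast_nonneg _
  have hcM : Complex.abs c ≤ M := abs_coeff_le f f.natDegree
  have hcw : Complex.abs (c * w) ≤ 2 * M := root_bound f hf w hw
  have hder : (derivative f).natDegree < e + 1 := he ▸ Polynomial.natDegree_derivative_lt hd
  rw [he]
  simp only [Nat.add_sub_cancel]
  rw [aeval_eq_sum_range' hder, Finset.mul_sum]
  calc Complex.abs (∑ i ∈ Finset.range (e+1), c ^ e * ((derivative f).coeff i • w ^ i))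
      ≤ ∑ i ∈ Finset.range (e+1), Complex.abs (c ^ e * ((derivative f).coeff i • w ^ i)) :=
        Complex.abs.sum_le _ _
    _ ≤ ∑ i ∈ Finset.range (e+1), ((e:ℝ)+1) * 2 ^ e * M ^ (e+1) := by
        apply Finset.sum_le_sum
        intro i hi
        have hie : i ≤ e := by
          rw [Finset.mem_range] at hi; omega
        have key : c ^ e * ((derivative f).coeff i • w ^ i)
            = ((derivative f).coeff i : ℂ) * (c ^ (e - i) * (c * w) ^ i) := by
          have hce : c ^ e = c ^ (e - i) * c ^ i := by
            rw [← pow_add, Nat.sub_add_cancel hie]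
          rw [zsmul_eq_mul, hce, mul_pow]; ring
        rw [key, map_mul, map_mul, map_pow, map_pow]
        have h1 : Complex.abs (((derivative f).coeff i : ℂ)) ≤ M * ((e:ℝ)+1) := by
          rw [Polynomial.coeff_derivative]
          push_cast
          rw [map_mul]
          have h1a : Complex.abs ((i:ℂ) + 1) = (i:ℝ) + 1 := by
            have : ((i:ℂ) + 1) = (((i+1:ℕ)):ℂ) := by push_cast; ring
            rw [this, Complex.abs_natCast]; push_cast; ring
          rw [h1a]
          have h1b : Complex.abs ((f.coeff (i+1) : ℂ)) ≤ M := abs_coeff_le f (i+1)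
          have h1c : (i:ℝ) + 1 ≤ (e:ℝ) + 1 := by exact_mod_cast Nat.succ_le_succ hie
          exact mul_le_mul h1b h1c (by positivity) hM0
        have h2 : Complex.abs c ^ (e - i) ≤ M ^ (e - i) :=
          pow_le_pow_left₀ (Complex.abs.nonneg _) hcM _
        have h3 : Complex.abs (c * w) ^ i ≤ (2 * M) ^ i :=
          pow_le_pow_left₀ (Complex.abs.nonneg _) hcw _
        calc Complex.abs (((derivative f).coeff i : ℂ))
              * (Complex.abs c ^ (e - i) * Complex.abs (c * w) ^ i)
            ≤ (M * ((e:ℝ)+1)) * (M ^ (e - i) * (2 * M) ^ i) := by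
              apply mul_le_mul h1 (mul_le_mul h2 h3 (by positivity) (by positivity))
                (by positivity) (by positivity)
          _ = ((e:ℝ)+1) * 2 ^ i * (M ^ (e - i) * M ^ i * M) := by
              rw [mul_pow]; ring
          _ = ((e:ℝ)+1) * 2 ^ i * M ^ (e + 1) := by
              rw [← pow_add, Nat.sub_add_cancel hie, pow_succ]
          _ ≤ ((e:ℝ)+1) * 2 ^ e * M ^ (e+1) := by
              have h2i : (2:ℝ) ^ i ≤ 2 ^ e := pow_le_pow_right₀ one_le_two hie
              gcongr
    _ = ((e:ℝ)+1) * (((e:ℝ)+1) * 2 ^ e * M ^ (e+1)) := by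
        rw [Finset.sum_const, Finset.card_range]
        push_cast; ring
    _ = ((e:ℝ)+1) ^ 2 * 2 ^ e * M ^ (e+1) := by ring
    _ = ((e+1:ℕ):ℝ) ^ 2 * 2 ^ e * M ^ (e+1) := by norm_cast

set_option maxHeartbeats 2000000 in
open IntermediateField in
/-- Let `f` be a degree-`d` integer polynomial with all roots simple and `f(ζ) = 0`.  Then
`|f'(ζ)| ≥ d^(-2d) (max |fᵢ|)^(-d²) 2^(-d(d-1))`. -/
theorem stmt12 (f : Polynomial ℤ) (hsq : Squarefree (f.map (Int.castRingHom ℂ)))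
    (ζ : ℂ) (hζ : Polynomial.aeval ζ f = 0) :
    ‖(Polynomial.derivative (f.map (Int.castRingHom ℂ))).eval ζ‖ ≥
      ((f.natDegree : ℝ) ^ (2 * f.natDegree) * (maxCoeff f : ℝ) ^ (f.natDegree ^ 2) *
          2 ^ (f.natDegree * (f.natDegree - 1)))⁻¹ := by
  classical
  have hf : f ≠ 0 := by
    rintro rfl
    simp only [Polynomial.map_zero] at hsq
    exact not_squarefree_zero hsq
  have hd : f.natDegree ≠ 0 := by
    intro h
    apply hf
    have hC := Polynomial.eq_C_of_natDegree_eq_zero h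
    rw [hC] at hζ
    rw [Polynomial.aeval_C] at hζ
    have : f.coeff 0 = 0 := by simpa using hζ
    rw [hC, this, map_zero]
  have hd1 : 1 ≤ f.natDegree := Nat.one_le_iff_ne_zero.mpr hd
  have hM1 : (1:ℝ) ≤ (maxCoeff f : ℝ) := by exact_mod_cast one_le_maxCoeff f hf
  have hdd1 : (1:ℝ) ≤ (f.natDegree : ℝ) := by exact_mod_cast hd1
  -- rewrite the target expression
  have hα : (Polynomial.derivative (f.map (Int.castRingHom ℂ))).eval ζ
      = aeval ζ (derivative f) := by
    rw [Polynomial.derivative_map, Polynomial.eval_map, Polynomial.aeval_def, algebraMap_int_eq]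
  -- derivative does not vanish at ζ
  have hFe : (f.map (Int.castRingHom ℂ)).eval ζ = 0 := by
    rw [Polynomial.eval_map, ← algebraMap_int_eq, ← Polynomial.aeval_def]; exact hζ
  have hαne : aeval ζ (derivative f) ≠ 0 := by
    intro h0
    obtain ⟨a, b, hab⟩ := (PerfectField.separable_iff_squarefree).mpr hsq
    have h1 := congrArg (Polynomial.eval ζ) hab
    rw [Polynomial.eval_add, Polynomial.eval_mul, Polynomial.eval_mul, hFe, hα, h0,
      Polynomial.eval_one] at h1
    simp at h1
  -- algebraic setup
  have hq0 : f.map (Int.castRingHom ℚ) ≠ 0 :=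
    (Polynomial.map_ne_zero_iff (f := Int.castRingHom ℚ) Int.cast_injective).mpr hf
  have hqζ : aeval ζ (f.map (Int.castRingHom ℚ)) = 0 := by
    rw [← algebraMap_int_eq, Polynomial.aeval_map_algebraMap]; exact hζ
  have hζint : IsIntegral ℚ ζ := (IsAlgebraic.isIntegral ⟨_, hq0, hqζ⟩)
  haveI : FiniteDimensional ℚ ℚ⟮ζ⟯ := IntermediateField.adjoin.finiteDimensional hζint
  set z : ℚ⟮ζ⟯ := IntermediateField.AdjoinSimple.gen ℚ ζ with hzdef
  have hzζ : algebraMap ℚ⟮ζ⟯ ℂ z = ζ := IntermediateField.AdjoinSimple.algebraMap_gen ℚ ζ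
  have hcardle : Fintype.card (ℚ⟮ζ⟯ →ₐ[ℚ] ℂ) ≤ f.natDegree := by
    rw [AlgHom.card ℚ ℚ⟮ζ⟯ ℂ, IntermediateField.adjoin.finrank hζint]
    have hdvd : minpoly ℚ ζ ∣ f.map (Int.castRingHom ℚ) := minpoly.dvd ℚ ζ hqζ
    have := Polynomial.natDegree_le_of_dvd hdvd hq0
    rwa [Polynomial.natDegree_map_eq_of_injective Int.cast_injective] at this
  -- aeval at z
  have haev : ∀ g : Polynomial ℤ, algebraMap ℚ⟮ζ⟯ ℂ (aeval z g) = aeval ζ g := by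
    intro g
    have h := Polynomial.aeval_algHom_apply ((algebraMap ℚ⟮ζ⟯ ℂ).toIntAlgHom) z g
    rw [show ((algebraMap ℚ⟮ζ⟯ ℂ).toIntAlgHom) z = ζ from hzζ] at h
    exact h.symm
  have hzf : aeval z f = 0 := by
    apply (algebraMap ℚ⟮ζ⟯ ℂ).injective
    rw [map_zero, haev f]
    exact hζ
  set γ : ℚ⟮ζ⟯ := aeval z (derivative f) with hγdef
  have hγℂ : algebraMap ℚ⟮ζ⟯ ℂ γ = aeval ζ (derivative f) := haev (derivative f)
  have hγ0 : γ ≠ 0 := by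
    intro h0
    apply hαne
    rw [← hγℂ, h0, map_zero]
  set c : ℤ := f.leadingCoeff with hcdef
  have hc0 : c ≠ 0 := Polynomial.leadingCoeff_ne_zero.mpr hf
  have hcK0 : (c : ℚ⟮ζ⟯) ≠ 0 := Int.cast_ne_zero.mpr hc0
  set β : ℚ⟮ζ⟯ := (c : ℚ⟮ζ⟯) ^ (f.natDegree - 1) * γ with hβdef
  have hcz : IsIntegral ℤ ((c : ℚ⟮ζ⟯) * z) := by
    have := isIntegral_leadingCoeff_smul f z hzf
    rwa [zsmul_eq_mul] at this
  have hβint : IsIntegral ℤ β :=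
    aux_int (derivative f) z c hcz (f.natDegree - 1)
      (by have := Polynomial.natDegree_derivative_lt hd; omega)
  have hβ0 : β ≠ 0 := mul_ne_zero (pow_ne_zero _ hcK0) hγ0
  -- norm
  set N : ℚ := Algebra.norm ℚ β with hNdef
  have hNβ : algebraMap ℚ ℂ N = ∏ σ : ℚ⟮ζ⟯ →ₐ[ℚ] ℂ, σ β :=
    Algebra.norm_eq_prod_embeddings ℚ ℂ β
  have hNint : IsIntegral ℤ N := Algebra.isIntegral_norm (K := ℚ) hβint
  obtain ⟨m, hm⟩ := IsIntegrallyClosed.isIntegral_iff.mp hNint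
  have hN0 : N ≠ 0 := by
    rw [hNdef, Algebra.norm_ne_zero_iff]
    exact hβ0
  have h1N : 1 ≤ Complex.abs (algebraMap ℚ ℂ N) := by
    have hm0 : m ≠ 0 := by
      rintro rfl
      rw [map_zero] at hm
      exact hN0 hm.symm
    have : algebraMap ℚ ℂ N = (m : ℂ) := by
      rw [← hm]; simp
    rw [this, Complex.abs_intCast, ← Int.cast_abs]
    exact_mod_cast Int.one_le_abs hm0
  -- bounds on embeddings
  set d := f.natDegree with hddef
  set M := (maxCoeff f : ℝ) with hMdef
  set B : ℝ := (d:ℝ)^2 * 2^(d-1) * M^d with hBdef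
  have hB1 : (1:ℝ) ≤ B := by
    rw [hBdef]
    have h1 : (1:ℝ) ≤ (d:ℝ)^2 := one_le_pow₀ hdd1
    have h2 : (1:ℝ) ≤ 2^(d-1) := one_le_pow₀ one_le_two
    have h3 : (1:ℝ) ≤ M^d := one_le_pow₀ hM1
    have h12 : (1:ℝ) ≤ (d:ℝ)^2 * 2^(d-1) := by nlinarith
    nlinarith
  have hcM : Complex.abs ((c:ℂ)) ≤ M := abs_coeff_le f f.natDegree
  have hσbound : ∀ σ : ℚ⟮ζ⟯ →ₐ[ℚ] ℂ, Complex.abs (σ β) ≤ B := by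
    intro σ
    have hσz : aeval (σ z) f = 0 := by
      have h := Polynomial.aeval_algHom_apply (σ.toRingHom.toIntAlgHom) z f
      rw [hzf, map_zero] at h
      exact h
    have hσβ : σ β = (c:ℂ)^(d-1) * aeval (σ z) (derivative f) := by
      rw [hβdef, map_mul, map_pow, map_intCast]
      congr 1
      exact (Polynomial.aeval_algHom_apply (σ.toRingHom.toIntAlgHom) z (derivative f)).symm
    rw [hσβ]
    exact conj_bound f hf hd (σ z) hσz
  set σ₀ : ℚ⟮ζ⟯ →ₐ[ℚ] ℂ := (ℚ⟮ζ⟯).val with hσ₀def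
  have hσ₀β : σ₀ β = algebraMap ℚ⟮ζ⟯ ℂ β := rfl
  have hβℂ : algebraMap ℚ⟮ζ⟯ ℂ β = (c:ℂ)^(d-1) * aeval ζ (derivative f) := by
    rw [hβdef, map_mul, map_pow, map_intCast, hγℂ]
  have hprod : (1:ℝ) ≤ M^(d-1) * Complex.abs (aeval ζ (derivative f)) * B^(d-1) := by
    have hsplit : ∏ σ : ℚ⟮ζ⟯ →ₐ[ℚ] ℂ, Complex.abs (σ β)
        = Complex.abs (σ₀ β) * ∏ σ ∈ Finset.univ.erase σ₀, Complex.abs (σ β) :=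
      (Finset.mul_prod_erase Finset.univ _ (Finset.mem_univ σ₀)).symm
    have habsN : Complex.abs (algebraMap ℚ ℂ N) = ∏ σ : ℚ⟮ζ⟯ →ₐ[ℚ] ℂ, Complex.abs (σ β) := by
      rw [hNβ, map_prod]
    have hcard2 : (Finset.univ.erase σ₀).card ≤ d - 1 := by
      have h := Finset.card_erase_of_mem (Finset.mem_univ σ₀)
      rw [Finset.card_univ] at h
      omega
    have hrest : ∏ σ ∈ Finset.univ.erase σ₀, Complex.abs (σ β) ≤ B^(d-1) := by
      calc ∏ σ ∈ Finset.univ.erase σ₀, Complex.abs (σ β)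
          ≤ ∏ _σ ∈ Finset.univ.erase σ₀, B :=
            Finset.prod_le_prod (fun σ _ => Complex.abs.nonneg _) (fun σ _ => hσbound σ)
        _ = B ^ (Finset.univ.erase σ₀).card := Finset.prod_const B
        _ ≤ B ^ (d-1) := pow_le_pow_right₀ hB1 hcard2
    have hfirst : Complex.abs (σ₀ β) ≤ M^(d-1) * Complex.abs (aeval ζ (derivative f)) := by
      rw [hσ₀β, hβℂ, map_mul, map_pow]
      exact mul_le_mul_of_nonneg_right (pow_le_pow_left₀ (Complex.abs.nonneg _) hcM _)
        (Complex.abs.nonneg _)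
    calc (1:ℝ) ≤ Complex.abs (algebraMap ℚ ℂ N) := h1N
      _ = Complex.abs (σ₀ β) * ∏ σ ∈ Finset.univ.erase σ₀, Complex.abs (σ β) := by
          rw [habsN, hsplit]
      _ ≤ (M^(d-1) * Complex.abs (aeval ζ (derivative f))) * B^(d-1) :=
          mul_le_mul hfirst hrest (Finset.prod_nonneg fun _ _ => Complex.abs.nonneg _)
            (mul_nonneg (by positivity) (Complex.abs.nonneg _))
  -- final arithmetic
  rw [ge_iff_le, hα]
  have hT : (0:ℝ) < (d:ℝ)^(2*d) * M^(d^2) * 2^(d*(d-1)) := by positivity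
  rw [inv_le_iff_one_le_mul₀ hT]
  have hMB : M^(d-1) * B^(d-1) ≤ (d:ℝ)^(2*d) * M^(d^2) * 2^(d*(d-1)) := by
    obtain ⟨e, he⟩ : ∃ e, d = e + 1 := ⟨d-1, by omega⟩
    rw [hBdef, he]
    simp only [Nat.add_sub_cancel]
    have hlin : (e+1)^2 = e + (e+1)*e + 1 := by ring
    have h2e : e*e ≤ (e+1)*e := Nat.mul_le_mul_right e (Nat.le_succ e)
    have hee : e + (e+1)*e ≤ (e+1)^2 := by linarith
    have hde : (1:ℝ) ≤ (((e+1:ℕ)):ℝ) := by push_cast; linarith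
    calc M^e * ((((e+1:ℕ)):ℝ)^2 * 2^e * M^(e+1))^e
        = (((e+1:ℕ)):ℝ)^(2*e) * M^(e + (e+1)*e) * 2^(e*e) := by
          rw [mul_pow, mul_pow, ← pow_mul, ← pow_mul, ← pow_mul, pow_add]
          ring
      _ ≤ (((e+1:ℕ)):ℝ)^(2*(e+1)) * M^((e+1)^2) * 2^((e+1)*(e+1-1)) := by
          simp only [Nat.add_sub_cancel]
          gcongr
          · omega
          · linarith [hee, h2e]
  calc (1:ℝ) ≤ M^(d-1) * Complex.abs (aeval ζ (derivative f)) * B^(d-1) := hprod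
    _ = Complex.abs (aeval ζ (derivative f)) * (M^(d-1) * B^(d-1)) := by ring
    _ ≤ Complex.abs (aeval ζ (derivative f)) * ((d:ℝ)^(2*d) * M^(d^2) * 2^(d*(d-1))) :=
        mul_le_mul_of_nonneg_left hMB (Complex.abs.nonneg _)
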